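/- Let p ≡ 1 (mod 4) be prime, K = kp odd, gcd(h,K) = 1, and h a quadratic nonresidue mod p. Then τ_er(h,K) + τ_es(h,K) ≡ 1 (mod 2), where τ_er and τ_es count even μ ∈ (0,K) coprime to p that are quadratic residues (resp. nonresidues) mod p with least residue {hμ}_K odd. -/

import Mathlib

open scoped Classical

/-- `τ_er(h,K)`: even `μ ∈ (0,K)`, coprime to `p`, quadratic residues mod `p`,
with `{hμ}_K` odd. -/
noncomputable def tauER (p K h : ℕ) : ℕ :=
  ((Finset.Ioo 0 K).filter (fun μ =>
    ¬ p ∣ μ ∧ 2 ∣ μ ∧ IsSquare (μ : ZMod p) ∧ Odd (h * μ % K))).card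

/-- `τ_es(h,K)`: even `μ ∈ (0,K)`, coprime to `p`, quadratic nonresidues mod `p`,
with `{hμ}_K` odd. -/
noncomputable def tauES (p K h : ℕ) : ℕ :=
  ((Finset.Ioo 0 K).filter (fun μ =>
    ¬ p ∣ μ ∧ 2 ∣ μ ∧ ¬ IsSquare (μ : ZMod p) ∧ Odd (h * μ % K))).card

theorem tauER_add_tauES_odd (p k h : ℕ) [Fact p.Prime] (h4 : p % 4 = 1)
    (hK : Odd (k * p)) (hcop : Nat.gcd h (k * p) = 1)
    (hns : ¬ IsSquare (h : ZMod p)) :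
    Odd (tauER p (k * p) h + tauES p (k * p) h) := by
  have pp : p.Prime := Fact.out
  set K := k * p with hKdef
  have hpK : p ∣ K := ⟨k, mul_comm k p⟩
  have hkodd : Odd k := (Nat.odd_mul.mp hK).1
  have hpodd : Odd p := (Nat.odd_mul.mp hK).2
  have hpodd2 : p % 2 = 1 := Nat.odd_iff.mp hpodd
  have hp3 : 3 ≤ p := by have := pp.two_le; omega
  have hk1 : 1 ≤ k := by
    have := Nat.odd_iff.mp hkodd; omega
  have hK1 : 1 < K := by
    have := Nat.mul_le_mul hk1 hp3
    omega
  have hKodd : K % 2 = 1 := Nat.odd_iff.mp hK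
  have hch : Nat.Coprime h K := hcop
  have hph : ¬ p ∣ h := by
    intro hd
    have h1 : p ∣ Nat.gcd h K := Nat.dvd_gcd hd hpK
    rw [hcop] at h1
    exact absurd (Nat.le_of_dvd one_pos h1) (by omega)
  -- c = (K-1)/2
  obtain ⟨c, hc⟩ : ∃ c, 2 * c + 1 = K := ⟨(K - 1) / 2, by omega⟩
  -- basic facts about w ν = h * ν % K
  have hwlt : ∀ ν : ℕ, h * ν % K < K := fun ν => Nat.mod_lt _ (by omega)
  have hwne : ∀ ν : ℕ, 0 < ν → ν < K → h * ν % K ≠ 0 := by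
    intro ν h0 hν hc0
    have h1 : K ∣ h * ν := Nat.dvd_of_mod_eq_zero hc0
    have h2 : K ∣ ν := Nat.Coprime.dvd_of_dvd_mul_left hch.symm h1
    exact absurd (Nat.le_of_dvd h0 h2) (by omega)
  have hmodp : ∀ ν : ℕ, p ∣ (h * ν % K) ↔ p ∣ h * ν := by
    intro ν
    constructor
    · intro hd
      have h1 : p ∣ (h * ν % K) + K * (h * ν / K) := hd.add (hpK.mul_right _)
      rwa [Nat.mod_add_div] at h1
    · intro hd
      have h1 : p ∣ (h * ν % K) + K * (h * ν / K) := by rwa [Nat.mod_add_div]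
      have h2 := Nat.dvd_sub h1 (hpK.mul_right (h * ν / K))
      simpa using h2
  have hwp : ∀ ν : ℕ, ¬ p ∣ ν → ¬ p ∣ (h * ν % K) := by
    intro ν hν hd
    rcases (Nat.Prime.dvd_mul pp).mp ((hmodp ν).mp hd) with h3 | h3
    · exact hph h3
    · exact hν h3
  have hpd : ∀ ν : ℕ, p ∣ ν → p ∣ (h * ν % K) := by
    intro ν hν
    exact (hmodp ν).mpr (hν.mul_left h)
  have hinjw : ∀ a b : ℕ, a < K → b < K → h * a % K = h * b % K → a = b := by
    intro a b ha hb hab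
    have h1 : a ≡ b [MOD K] := Nat.ModEq.cancel_left_of_coprime hch.symm hab
    rwa [Nat.ModEq, Nat.mod_eq_of_lt ha, Nat.mod_eq_of_lt hb] at h1
  have hpd2 : ∀ x : ℕ, p ∣ 2 * x → p ∣ x := by
    intro x hx
    rcases (Nat.Prime.dvd_mul pp).mp hx with h2 | h2
    · exact absurd (Nat.le_of_dvd (by norm_num) h2) (by omega)
    · exact h2
  -- opposite values can't sum to K on the half range
  have hopp : ∀ a b : ℕ, 0 < a → a ≤ c → 0 < b → b ≤ c →
      (h * a % K) + (h * b % K) = K → False := by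
    intro a b ha0 hac hb0 hbc hsum
    have h1 : h * a + h * b ≡ (h * a % K) + (h * b % K) [MOD K] :=
      (Nat.mod_modEq (h * a) K).symm.add (Nat.mod_modEq (h * b) K).symm
    rw [hsum] at h1
    have h2 : K ∣ h * a + h * b := by
      have h3 : h * a + h * b ≡ 0 [MOD K] := h1.trans (Nat.modEq_zero_iff_dvd.mpr dvd_rfl)
      exact Nat.modEq_zero_iff_dvd.mp h3
    rw [← mul_add] at h2
    have h4 : K ∣ a + b := Nat.Coprime.dvd_of_dvd_mul_left hch.symm h2
    have h5 : K ≤ a + b := Nat.le_of_dvd (by omega) h4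
    omega
  -- the sets
  set M : Finset ℕ := (Finset.Ioo 0 K).filter (fun μ => ¬ p ∣ μ) with hM
  set Hs : Finset ℕ := (Finset.Ioc 0 c).filter (fun ν => ¬ p ∣ ν) with hHs
  have hmemM : ∀ μ : ℕ, μ ∈ M ↔ 0 < μ ∧ μ < K ∧ ¬ p ∣ μ := by
    intro μ; rw [hM]; simp [Finset.mem_filter, Finset.mem_Ioo, and_assoc]
  have hmemH : ∀ ν : ℕ, ν ∈ Hs ↔ 0 < ν ∧ ν ≤ c ∧ ¬ p ∣ ν := by
    intro ν; rw [hHs]; simp [Finset.mem_filter, Finset.mem_Ioc, and_assoc]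
  -- Step 1 : tauER + tauES = N
  have step1 : tauER p K h + tauES p K h
      = ((M.filter fun μ => 2 ∣ μ ∧ Odd (h * μ % K))).card := by
    unfold tauER tauES
    rw [← Finset.card_filter_add_card_filter_not
      (s := M.filter fun μ => 2 ∣ μ ∧ Odd (h * μ % K)) (fun μ : ℕ => IsSquare (μ : ZMod p))]
    congr 2
    · ext x
      simp only [hM, Finset.mem_filter, Finset.mem_Ioo]
      tauto
    · ext x
      simp only [hM, Finset.mem_filter, Finset.mem_Ioo]
      tauto
  -- Step 2 : # {μ ∈ M, w μ odd} = # {μ ∈ M, μ odd}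
  obtain ⟨h', hh'⟩ : ∃ m, h * m % K = 1 :=
    by obtain ⟨m, -, hm⟩ := Nat.exists_mul_mod_eq_one_of_coprime hch (by omega); exact ⟨m, hm⟩
  have step2 : (M.filter fun μ => Odd (h * μ % K)).card
      = (M.filter fun μ => ¬ 2 ∣ μ).card := by
    apply Finset.card_nbij (fun μ => h * μ % K)
    · intro a ha
      simp only [Finset.mem_coe, Finset.mem_filter] at ha ⊢
      obtain ⟨haM, haodd⟩ := ha
      rw [hmemM] at haM
      refine ⟨(hmemM _).mpr ⟨?_, hwlt a, hwp a haM.2.2⟩, ?_⟩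
      · exact Nat.pos_of_ne_zero (hwne a haM.1 haM.2.1)
      · rw [Nat.odd_iff] at haodd; omega
    · intro a ha b hb hab
      simp only [Finset.coe_filter, Set.mem_setOf_eq] at ha hb
      rw [hmemM] at ha hb
      exact hinjw a b ha.1.2.1 hb.1.2.1 hab
    · intro ν hν
      simp only [Finset.coe_filter, Set.mem_setOf_eq] at hν
      rw [hmemM] at hν
      obtain ⟨⟨hν0, hνK, hνp⟩, hνodd⟩ := hν
      have hwμ : h * (h' * ν % K) % K = ν := by
        have e1 : h * (h' * ν % K) ≡ h * (h' * ν) [MOD K] :=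
          (Nat.mod_modEq (h' * ν) K).mul_left h
        have e2 : h * (h' * ν) ≡ ν [MOD K] := by
          rw [← mul_assoc]
          have hhh : h * h' ≡ 1 [MOD K] := by
            rw [Nat.ModEq, hh', Nat.mod_eq_of_lt (by omega)]
          simpa using hhh.mul_right ν
        have e3 := e1.trans e2
        rwa [Nat.ModEq, Nat.mod_eq_of_lt hνK] at e3
      refine ⟨h' * ν % K, ?_, hwμ⟩
      simp only [Finset.coe_filter, Set.mem_setOf_eq]
      refine ⟨(hmemM _).mpr ⟨?_, Nat.mod_lt _ (by omega), ?_⟩,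
        by rw [hwμ]; exact Nat.odd_iff.mpr (by omega)⟩
      · rcases Nat.eq_zero_or_pos (h' * ν % K) with h0 | h0
        · exfalso; rw [h0, mul_zero, Nat.zero_mod] at hwμ; omega
        · exact h0
      · intro hd
        have hdν : p ∣ ν := by rw [← hwμ]; exact hpd _ hd
        exact hνp hdν
  -- Step 3 : # {μ ∈ M, μ odd} = Hs.card
  have hmapKν : ∀ ν : ℕ, ν ∈ Hs → (K - 2 * ν) ∈ M ∧ ¬ 2 ∣ (K - 2 * ν) := by
    intro ν hν
    rw [hmemH] at hν
    obtain ⟨hν0, hνc, hνp⟩ := hν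
    refine ⟨(hmemM _).mpr ⟨by omega, by omega, ?_⟩, by omega⟩
    intro hd
    have h1 : p ∣ K - (K - 2 * ν) := Nat.dvd_sub hpK hd
    have h2 : K - (K - 2 * ν) = 2 * ν := by omega
    rw [h2] at h1
    exact hνp (hpd2 _ h1)
  have hsurjKν : ∀ μ : ℕ, μ ∈ M → ¬ 2 ∣ μ → ((K - μ) / 2) ∈ Hs ∧ K - 2 * ((K - μ) / 2) = μ := by
    intro μ hμ hμodd
    rw [hmemM] at hμ
    obtain ⟨hμ0, hμK, hμp⟩ := hμ
    have he : K - 2 * ((K - μ) / 2) = μ := by omega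
    refine ⟨(hmemH _).mpr ⟨by omega, by omega, ?_⟩, he⟩
    intro hd
    have h1 : p ∣ 2 * ((K - μ) / 2) := hd.mul_left 2
    have h2 : 2 * ((K - μ) / 2) = K - μ := by omega
    rw [h2] at h1
    have h3 : p ∣ K - (K - μ) := Nat.dvd_sub hpK h1
    have h4 : K - (K - μ) = μ := by omega
    rw [h4] at h3
    exact hμp h3
  have step3 : (M.filter fun μ => ¬ 2 ∣ μ).card = Hs.card := by
    symm
    apply Finset.card_nbij (fun ν => K - 2 * ν)
    · intro a ha
      obtain ⟨h1, h2⟩ := hmapKν a ha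
      simp only [Finset.mem_coe, Finset.mem_filter]
      exact ⟨h1, h2⟩
    · intro a ha b hb hab
      simp only [Finset.mem_coe] at ha hb
      rw [hmemH] at ha hb
      have hab' : K - 2 * a = K - 2 * b := hab
      omega
    · intro μ hμ
      simp only [Finset.coe_filter, Set.mem_setOf_eq] at hμ ⊢
      obtain ⟨hμM, hμodd⟩ := hμ
      obtain ⟨h1, h2⟩ := hsurjKν μ hμM hμodd
      exact ⟨(K - μ) / 2, Finset.mem_coe.mpr h1, h2⟩
  -- key parity lemma
  have keyW : ∀ ν : ℕ, 0 < ν → 2 * ν < K →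
      (Odd (h * (K - 2 * ν) % K) ↔ 2 * (h * ν % K) < K) := by
    intro ν h0 h2ν
    have hwv0 : h * ν % K ≠ 0 := hwne ν h0 (by omega)
    have hwvK : h * ν % K < K := hwlt ν
    have hwv2 : (h * ν % K) % 2 = (h * ν) % 2 ∨ True := Or.inr trivial
    have hdvd : K ∣ h * (K - 2 * ν) + 2 * (h * ν % K) := by
      have hmle : h * (2 * ν) ≤ h * K := Nat.mul_le_mul_left h (by omega)
      have e : h * (K - 2 * ν) + 2 * (h * ν) = h * K := by
        rw [Nat.mul_sub]
        have : 2 * (h * ν) = h * (2 * ν) := by ring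
        omega
      have hmn : h * (K - 2 * ν) + 2 * (h * ν % K) ≡ h * K [MOD K] := by
        calc h * (K - 2 * ν) + 2 * (h * ν % K)
            ≡ h * (K - 2 * ν) + 2 * (h * ν) [MOD K] :=
              Nat.ModEq.add_left _ ((Nat.mod_modEq (h * ν) K).mul_left 2)
          _ = h * K := e
      have h0' : h * K ≡ 0 [MOD K] := Nat.modEq_zero_iff_dvd.mpr ⟨h, mul_comm _ _⟩
      exact Nat.modEq_zero_iff_dvd.mp (hmn.trans h0')
    by_cases hlt : 2 * (h * ν % K) < K
    · have hval : h * (K - 2 * ν) % K = K - 2 * (h * ν % K) := by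
        have l2 : K ∣ (K - 2 * (h * ν % K)) + 2 * (h * ν % K) := by
          have : (K - 2 * (h * ν % K)) + 2 * (h * ν % K) = K := by omega
          rw [this]
        have l3 : h * (K - 2 * ν) ≡ K - 2 * (h * ν % K) [MOD K] :=
          Nat.ModEq.add_right_cancel' _
            ((Nat.modEq_zero_iff_dvd.mpr hdvd).trans
              (Nat.modEq_zero_iff_dvd.mpr l2).symm)
        rw [Nat.ModEq] at l3
        rw [l3, Nat.mod_eq_of_lt (by omega)]
      rw [hval, Nat.odd_iff]
      omega
    · have hgt : K < 2 * (h * ν % K) := by omega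
      have hval : h * (K - 2 * ν) % K = 2 * K - 2 * (h * ν % K) := by
        have l2 : K ∣ (2 * K - 2 * (h * ν % K)) + 2 * (h * ν % K) := by
          have : (2 * K - 2 * (h * ν % K)) + 2 * (h * ν % K) = 2 * K := by omega
          rw [this]
          exact ⟨2, by ring⟩
        have l3 : h * (K - 2 * ν) ≡ 2 * K - 2 * (h * ν % K) [MOD K] :=
          Nat.ModEq.add_right_cancel' _
            ((Nat.modEq_zero_iff_dvd.mpr hdvd).trans
              (Nat.modEq_zero_iff_dvd.mpr l2).symm)
        rw [Nat.ModEq] at l3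
        rw [l3, Nat.mod_eq_of_lt (by omega)]
      rw [hval, Nat.odd_iff]
      omega
  -- Step 4 : U = U'
  have step4 : (M.filter fun μ => ¬ 2 ∣ μ ∧ Odd (h * μ % K)).card
      = (Hs.filter fun ν => 2 * (h * ν % K) < K).card := by
    symm
    apply Finset.card_nbij (fun ν => K - 2 * ν)
    · intro a ha
      simp only [Finset.mem_coe, Finset.mem_filter] at ha ⊢
      obtain ⟨haH, halt⟩ := ha
      obtain ⟨h1, h2⟩ := hmapKν a haH
      rw [hmemH] at haH
      refine ⟨h1, h2, ?_⟩
      exact (keyW a haH.1 (by omega)).mpr halt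
    · intro a ha b hb hab
      simp only [Finset.mem_coe, Finset.mem_filter] at ha hb
      obtain ⟨ha1, _⟩ := ha
      obtain ⟨hb1, _⟩ := hb
      rw [hmemH] at ha1 hb1
      have hab' : K - 2 * a = K - 2 * b := hab
      omega
    · intro μ hμ
      simp only [Finset.coe_filter, Set.mem_setOf_eq] at hμ ⊢
      obtain ⟨hμM, hμodd, hμw⟩ := hμ
      obtain ⟨h1, h2⟩ := hsurjKν μ hμM hμodd
      refine ⟨(K - μ) / 2, ⟨h1, ?_⟩, h2⟩
      rw [hmemH] at h1
      have := (keyW ((K - μ) / 2) h1.1 (by omega)).mp (by rw [h2]; exact hμw)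
      exact this
  -- m : the Gauss lemma count
  set m : ℕ := (Hs.filter fun ν => ¬ 2 * (h * ν % K) < K).card with hmdef
  -- Step 5
  have step5 : (Hs.filter fun ν => 2 * (h * ν % K) < K).card + m = Hs.card :=
    Finset.card_filter_add_card_filter_not _
  -- Step 6 : Hs.card = (p / 2) * k
  have step6 : Hs.card = (p / 2) * k := by
    have hsplit : ((Finset.Ioc 0 c).filter (fun ν => p ∣ ν)).card + Hs.card
        = (Finset.Ioc 0 c).card := by
      rw [hHs]
      exact Finset.card_filter_add_card_filter_not _
    have hcard : (Finset.Ioc 0 c).card = c := by simp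
    have hdiv : ((Finset.Ioc 0 c).filter (fun ν => p ∣ ν)).card = c / p :=
      Nat.Ioc_filter_dvd_card_eq_div c p
    obtain ⟨k', hk'⟩ := hkodd
    obtain ⟨q, hq⟩ := hpodd
    have hKe : K = 2 * (k' * p) + p := by rw [hKdef, hk']; ring
    have hcp : c / p = k' := by
      apply Nat.div_eq_of_lt_le
      · omega
      · have e2 : (k' + 1) * p = k' * p + p := by ring
        omega
    have e5 : (2 * k' + 1) * (2 * q + 1) = 4 * (k' * q) + 2 * k' + 2 * q + 1 := by ring
    have hKe2 : K = (2 * k' + 1) * (2 * q + 1) := by rw [hKdef, hk', hq]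
    have hq2 : p / 2 = q := by omega
    have e3 : q * (2 * k' + 1) = 2 * (k' * q) + q := by ring
    rw [hq2, hk']
    omega
  -- Step 7 : the product argument in ZMod p
  have hK0cast : ((K : ℕ) : ZMod p) = 0 := (ZMod.natCast_eq_zero_iff K p).mpr hpK
  have hcast : ∀ ν : ℕ, ((h * ν % K : ℕ) : ZMod p) = ((h * ν : ℕ) : ZMod p) := by
    intro ν
    conv_rhs => rw [← Nat.mod_add_div (h * ν) K]
    push_cast
    rw [hK0cast]
    ring
  have hmapsσ : ∀ a ∈ Hs,
      (if 2 * (h * a % K) < K then h * a % K else K - h * a % K) ∈ Hs := by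
    intro a ha
    rw [hmemH] at ha ⊢
    obtain ⟨ha0, hac, hap⟩ := ha
    have hw0 : h * a % K ≠ 0 := hwne a ha0 (by omega)
    have hwK : h * a % K < K := hwlt a
    have hwpp : ¬ p ∣ (h * a % K) := hwp a hap
    have hwe : (h * a % K) % 2 = (h * a % K) % 2 := rfl
    split_ifs with hlt
    · exact ⟨by omega, by omega, hwpp⟩
    · refine ⟨by omega, ?_, ?_⟩
      · -- K - w ≤ c ; need 2w ≠ K i.e. parity
        rcases Nat.eq_or_lt_of_le (not_lt.mp hlt) with heq | hgt
        · exfalso; omega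
        · omega
      · intro hd
        have h1 : p ∣ K - (K - h * a % K) := Nat.dvd_sub hpK hd
        have h2 : K - (K - h * a % K) = h * a % K := by omega
        rw [h2] at h1
        exact hwpp h1
  have hinjσ : Set.InjOn
      (fun ν => if 2 * (h * ν % K) < K then h * ν % K else K - h * ν % K) Hs := by
    intro a ha b hb hab
    simp only [Finset.mem_coe] at ha hb
    have haH := (hmemH a).mp ha
    have hbH := (hmemH b).mp hb
    have hwaK : h * a % K < K := hwlt a
    have hwbK : h * b % K < K := hwlt b
    simp only at hab
    split_ifs at hab with h1 h2 h2
    · exact hinjw a b (by omega) (by omega) hab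
    · exfalso
      exact hopp a b haH.1 haH.2.1 hbH.1 hbH.2.1 (by omega)
    · exfalso
      exact hopp a b haH.1 haH.2.1 hbH.1 hbH.2.1 (by omega)
    · exact hinjw a b (by omega) (by omega) (by omega)
  have hsurjσ : Set.SurjOn
      (fun ν => if 2 * (h * ν % K) < K then h * ν % K else K - h * ν % K) Hs Hs := by
    intro b hb
    simp only [Finset.mem_coe] at hb
    obtain ⟨a, ha, hab⟩ := Finset.surj_on_of_inj_on_of_card_le
      (fun a (_ : a ∈ Hs) => if 2 * (h * a % K) < K then h * a % K else K - h * a % K)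
      (fun a ha => hmapsσ a ha)
      (fun a₁ a₂ ha₁ ha₂ e => hinjσ (Finset.mem_coe.mpr ha₁) (Finset.mem_coe.mpr ha₂) e)
      le_rfl b hb
    exact ⟨a, Finset.mem_coe.mpr ha, hab.symm⟩
  have hprodne : (∏ ν ∈ Hs, (ν : ZMod p)) ≠ 0 := by
    rw [Finset.prod_ne_zero_iff]
    intro ν hν
    rw [Ne, ZMod.natCast_eq_zero_iff]
    exact ((hmemH ν).mp hν).2.2
  have hprod1 : ∏ ν ∈ Hs, ((h * ν : ℕ) : ZMod p)
      = (h : ZMod p) ^ Hs.card * ∏ ν ∈ Hs, (ν : ZMod p) := by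
    rw [← Finset.prod_const, ← Finset.prod_mul_distrib]
    apply Finset.prod_congr rfl
    intro x _
    push_cast
    ring
  have hsign : ∀ ν ∈ Hs, ((h * ν : ℕ) : ZMod p)
      = (if 2 * (h * ν % K) < K then (1 : ZMod p) else -1)
        * (((if 2 * (h * ν % K) < K then h * ν % K else K - h * ν % K) : ℕ) : ZMod p) := by
    intro ν hν
    rw [← hcast]
    split_ifs with hc1
    · rw [one_mul]
    · rw [Nat.cast_sub (le_of_lt (hwlt ν)), hK0cast]
      ring
  have hprod2 : ∏ ν ∈ Hs, ((h * ν : ℕ) : ZMod p)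
      = (-1 : ZMod p) ^ m * ∏ ν ∈ Hs, (ν : ZMod p) := by
    rw [Finset.prod_congr rfl hsign, Finset.prod_mul_distrib]
    congr 1
    · rw [← Finset.prod_filter_mul_prod_filter_not Hs (fun ν => 2 * (h * ν % K) < K)]
      have e1 : ∏ ν ∈ Hs.filter (fun ν => 2 * (h * ν % K) < K),
          (if 2 * (h * ν % K) < K then (1 : ZMod p) else -1) = 1 := by
        apply Finset.prod_eq_one
        intro x hx
        rw [if_pos (Finset.mem_filter.mp hx).2]
      have e2 : ∏ ν ∈ Hs.filter (fun ν => ¬ 2 * (h * ν % K) < K),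
          (if 2 * (h * ν % K) < K then (1 : ZMod p) else -1) = (-1) ^ m := by
        rw [Finset.prod_congr rfl (fun x hx => if_neg (Finset.mem_filter.mp hx).2),
          Finset.prod_const, hmdef]
      rw [e1, e2, one_mul]
    · exact Finset.prod_nbij _ hmapsσ hinjσ hsurjσ (fun a _ => rfl)
  have hkey : (h : ZMod p) ^ Hs.card = (-1 : ZMod p) ^ m :=
    mul_right_cancel₀ hprodne (hprod1.symm.trans hprod2)
  have hh0 : (h : ZMod p) ≠ 0 := by
    rw [Ne, ZMod.natCast_eq_zero_iff]
    exact hph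
  have heuler : (h : ZMod p) ^ (p / 2) = -1 := by
    rcases ZMod.pow_div_two_eq_neg_one_or_one p hh0 with h1 | h1
    · exact absurd ((ZMod.euler_criterion p hh0).mpr h1) hns
    · exact h1
  have hm : Odd m := by
    by_contra hme
    have hmeven : Even m := Nat.not_odd_iff_even.mp hme
    have hcontr : (-1 : ZMod p) = 1 := by
      calc (-1 : ZMod p) = ((h : ZMod p) ^ (p / 2)) ^ k := by rw [heuler, Odd.neg_one_pow hkodd]
        _ = (h : ZMod p) ^ (p / 2 * k) := by rw [pow_mul]
        _ = (h : ZMod p) ^ Hs.card := by rw [step6]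
        _ = (-1 : ZMod p) ^ m := hkey
        _ = 1 := Even.neg_one_pow hmeven
    haveI : Fact (2 < p) := ⟨by omega⟩
    exact ZMod.neg_one_ne_one hcontr
  -- assemble
  have hTsplit : (M.filter fun μ => 2 ∣ μ ∧ Odd (h * μ % K)).card
      + (M.filter fun μ => ¬ 2 ∣ μ ∧ Odd (h * μ % K)).card
      = (M.filter fun μ => Odd (h * μ % K)).card := by
    rw [← Finset.card_filter_add_card_filter_not
      (s := M.filter fun μ => Odd (h * μ % K)) (fun μ => 2 ∣ μ)]
    congr 2
    · ext x; simp only [Finset.mem_filter]; tauto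
    · ext x; simp only [Finset.mem_filter]; tauto
  rw [step1]
  have hfinal : (M.filter fun μ => 2 ∣ μ ∧ Odd (h * μ % K)).card = m := by
    omega
  rw [hfinal]
  exact hm
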